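/- Let 0 < R < 1, let k be an integer with k < 1, and let f ∈ L²((0,R), |ln r|^k r dr). Define h(r) = -∫_r^R f(t) dt. Then h ∈ L²((0,R), |ln r|^{k-2} r⁻¹ dr), and there is a constant C depending only on k and R such that ∫_0^R |h(r)|² |ln r|^{k-2} r⁻¹ dr ≤ C ∫_0^R |f(r)|² |ln r|^k r dr. -/

import Mathlib

open MeasureTheory Set

/-- derivative of the antiderivative `-(-log t)^γ / γ`. -/
lemma hardy_aux_deriv (γ : ℝ) (hγ : γ ≠ 0) {t : ℝ} (ht0 : 0 < t) (ht1 : t < 1) :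
    HasDerivAt (fun s => -(-Real.log s) ^ γ / γ) ((-Real.log t) ^ (γ - 1) / t) t := by
  have hlt : -Real.log t ≠ 0 := by
    have : Real.log t < 0 := Real.log_neg ht0 ht1
    linarith
  have h1 : HasDerivAt (fun s : ℝ => -Real.log s) (-t⁻¹) t :=
    (Real.hasDerivAt_log (ne_of_gt ht0)).neg
  have h2 : HasDerivAt (fun x : ℝ => x ^ γ) (γ * (-Real.log t) ^ (γ - 1)) (-Real.log t) :=
    Real.hasDerivAt_rpow_const (Or.inl hlt)
  have h3 := h2.comp t h1
  have h4 := (h3.neg).div_const γ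
  refine h4.congr_deriv ?_
  field_simp

/-- value of the finite integral. -/
lemma hardy_aux_int (γ : ℝ) (hγ : γ ≠ 0) {a b : ℝ} (ha : 0 < a) (hab : a ≤ b) (hb : b < 1) :
    ∫⁻ t in Ioo a b, ENNReal.ofReal ((-Real.log t) ^ (γ - 1) / t)
      = ENNReal.ofReal (((-Real.log a) ^ γ - (-Real.log b) ^ γ) / γ) := by
  have hb0 : 0 < b := lt_of_lt_of_le ha hab
  have hcont : ContinuousOn (fun t : ℝ => (-Real.log t) ^ (γ - 1) / t) (Icc a b) := by
    apply ContinuousOn.div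
    · apply ContinuousOn.rpow_const
      · exact (Real.continuousOn_log.mono (fun x hx => ne_of_gt (lt_of_lt_of_le ha hx.1))).neg
      · intro x hx
        left
        have : Real.log x < 0 := Real.log_neg (lt_of_lt_of_le ha hx.1) (lt_of_le_of_lt hx.2 hb)
        intro h; rw [neg_eq_zero] at h; linarith
    · exact continuousOn_id
    · intro x hx; exact ne_of_gt (lt_of_lt_of_le ha hx.1)
  have hint : IntegrableOn (fun t : ℝ => (-Real.log t) ^ (γ - 1) / t) (Ioo a b) :=
    (hcont.integrableOn_Icc).mono_set Ioo_subset_Icc_self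
  have hnn : 0 ≤ᵐ[volume.restrict (Ioo a b)] fun t : ℝ => (-Real.log t) ^ (γ - 1) / t := by
    filter_upwards [ae_restrict_mem measurableSet_Ioo] with t ht
    have ht0 : 0 < t := lt_trans ha ht.1
    have hlt : 0 < -Real.log t := by
      have : Real.log t < 0 := Real.log_neg ht0 (lt_trans ht.2 hb)
      linarith
    positivity
  rw [← ofReal_integral_eq_lintegral_ofReal hint hnn]
  congr 1
  have hftc : ∫ t in a..b, (-Real.log t) ^ (γ - 1) / t
      = (-(-Real.log b) ^ γ / γ) - (-(-Real.log a) ^ γ / γ) := by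
    apply intervalIntegral.integral_eq_sub_of_hasDerivAt
    · intro x hx
      rw [uIcc_of_le hab] at hx
      exact hardy_aux_deriv γ hγ (lt_of_lt_of_le ha hx.1) (lt_of_le_of_lt hx.2 hb)
    · rw [intervalIntegrable_iff_integrableOn_Icc_of_le hab]
      exact hcont.integrableOn_Icc
  rw [intervalIntegral.integral_of_le hab, integral_Ioc_eq_integral_Ioo] at hftc
  rw [hftc]
  ring

lemma hardy_meas (γ : ℝ) : Measurable (fun r : ℝ => ENNReal.ofReal ((-Real.log r) ^ γ / r)) := by
  measurability

/-- improper integral bound for `γ < 0`. -/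
lemma hardy_aux_int_improper (γ : ℝ) (hγ : γ < 0) {b : ℝ} (hb0 : 0 < b) (hb : b < 1) :
    ∫⁻ r in Ioo 0 b, ENNReal.ofReal ((-Real.log r) ^ (γ - 1) / r)
      ≤ ENNReal.ofReal ((-Real.log b) ^ γ / (-γ)) := by
  set g : ℝ → ENNReal := fun r => ENNReal.ofReal ((-Real.log r) ^ (γ - 1) / r) with hg
  have hgm : Measurable g := hardy_meas (γ - 1)
  set a : ℕ → ℝ := fun n => b / (n + 2) with ha
  have ha_pos : ∀ n, 0 < a n := fun n => by positivity
  have ha_lt : ∀ n, a n < b := by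
    intro n
    rw [ha]
    rw [div_lt_iff₀ (by positivity)]
    nlinarith [ha_pos n]
  have hsup : (fun x => ⨆ n, (Ioo (a n) b).indicator g x) = (Ioo (0:ℝ) b).indicator g := by
    funext x
    by_cases hx : x ∈ Ioo (0:ℝ) b
    · rw [Set.indicator_of_mem hx]
      obtain ⟨n, hn⟩ : ∃ n : ℕ, a n < x := by
        obtain ⟨n, hn⟩ := exists_nat_gt (b / x)
        refine ⟨n, ?_⟩
        rw [ha]
        show b / (n + 2) < x
        rw [div_lt_iff₀ (by positivity)]
        have h1 : b / x < n + 2 := by linarith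
        rw [div_lt_iff₀ hx.1] at h1
        linarith
      apply le_antisymm
      · exact iSup_le fun m => Set.indicator_le_self _ _ x
      · have hxm : x ∈ Ioo (a n) b := ⟨hn, hx.2⟩
        calc g x = (Ioo (a n) b).indicator g x :=
              (Set.indicator_of_mem hxm g).symm
          _ ≤ ⨆ m, (Ioo (a m) b).indicator g x :=
              le_iSup (fun m => (Ioo (a m) b).indicator g x) n
    · rw [Set.indicator_of_notMem hx]
      apply le_antisymm _ zero_le
      apply iSup_le
      intro n
      rw [Set.indicator_of_notMem]
      intro hxn
      exact hx ⟨lt_trans (ha_pos n) hxn.1, hxn.2⟩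
  have hmono : Monotone (fun n => (Ioo (a n) b).indicator g) := by
    intro n m hnm
    have hc : (n:ℝ) + 2 ≤ (m:ℝ) + 2 := by
      have := (Nat.cast_le (α := ℝ)).2 hnm; linarith
    have hle : a m ≤ a n := by
      show b / ((m:ℝ) + 2) ≤ b / ((n:ℝ) + 2)
      gcongr
    apply Set.indicator_le_indicator_of_subset (Ioo_subset_Ioo_left hle)
    intro x; exact zero_le
  have key : ∫⁻ r in Ioo 0 b, g r = ⨆ n, ∫⁻ r in Ioo (a n) b, g r := by
    rw [← lintegral_indicator measurableSet_Ioo, ← hsup,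
      lintegral_iSup (fun n => hgm.indicator measurableSet_Ioo) hmono]
    congr 1
    funext n
    rw [lintegral_indicator measurableSet_Ioo]
  rw [key]
  apply iSup_le
  intro n
  rw [hardy_aux_int γ (ne_of_lt hγ) (ha_pos n) (le_of_lt (ha_lt n)) hb]
  apply ENNReal.ofReal_le_ofReal
  have hlb : 0 < -Real.log b := by have := Real.log_neg hb0 hb; linarith
  have hla : -Real.log b ≤ -Real.log (a n) := by
    have := Real.log_le_log (ha_pos n) (le_of_lt (ha_lt n))
    linarith
  have hA : 0 ≤ (-Real.log (a n)) ^ γ := Real.rpow_nonneg (by linarith) _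
  have h2 : ((-Real.log (a n)) ^ γ - (-Real.log b) ^ γ) / γ
      = ((-Real.log b) ^ γ - (-Real.log (a n)) ^ γ) / (-γ) := by
    ring
  rw [h2]
  gcongr
  · linarith
  · linarith

lemma hardy_meas2 {f : ℝ → ℝ} (hf : Measurable f) (c : ℝ) :
    Measurable fun t : ℝ => ENNReal.ofReal (f t ^ 2 * (-Real.log t) ^ c * t) := by
  measurability

lemma hardy_meas3 {f : ℝ → ℝ} (hf : Measurable f) (c d : ℝ) :
    Measurable fun t : ℝ => ENNReal.ofReal (|f t| * (-Real.log t) ^ c * t ^ d) := by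
  measurability

lemma hardy_meas4 (c d : ℝ) :
    Measurable fun t : ℝ => ENNReal.ofReal ((-Real.log t) ^ c * t ^ d) := by
  measurability

lemma hardy_sq_half (x : ENNReal) : (x ^ ((2:ℝ)⁻¹)) ^ (2:ℕ) = x := by
  rw [← ENNReal.rpow_natCast, ← ENNReal.rpow_mul]
  norm_num


lemma hardy_sq_half2 (x : ENNReal) : (x ^ ((1:ℝ)/2)) ^ (2:ℕ) = x := by
  rw [← ENNReal.rpow_natCast, ← ENNReal.rpow_mul]
  norm_num

lemma hardy_holder {f : ℝ → ℝ} (hf : Measurable f) {r R : ℝ}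
    (hr0 : 0 < r) (hrR : r < R) (hR1 : R < 1) (β : ℝ) :
    (∫⁻ t in Ioo r R, ENNReal.ofReal |f t|) ^ (2:ℕ)
      ≤ (∫⁻ t in Ioo r R, ENNReal.ofReal (f t ^ 2 * (-Real.log t) ^ β * t))
        * (∫⁻ t in Ioo r R, ENNReal.ofReal ((-Real.log t) ^ (-β) * t⁻¹)) := by
  set μ := volume.restrict (Ioo r R) with hμ
  set φ : ℝ → ENNReal :=
    fun t => ENNReal.ofReal (|f t| * (-Real.log t) ^ (β/2) * t ^ ((1:ℝ)/2)) with hφdef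
  set ψ : ℝ → ENNReal :=
    fun t => ENNReal.ofReal ((-Real.log t) ^ (-(β/2)) * t ^ (-((1:ℝ)/2))) with hψdef
  have hφm : Measurable φ := hardy_meas3 hf _ _
  have hψm : Measurable ψ := hardy_meas4 _ _
  have hmem : ∀ᵐ t ∂μ, t ∈ Ioo r R := ae_restrict_mem measurableSet_Ioo
  -- basic facts on the set
  have hfacts : ∀ t ∈ Ioo r R, 0 < t ∧ 0 < -Real.log t := by
    intro t ht
    have ht0 : 0 < t := lt_trans hr0 ht.1
    have : Real.log t < 0 := Real.log_neg ht0 (lt_trans ht.2 hR1)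
    exact ⟨ht0, by linarith⟩
  have hprod : ∀ᵐ t ∂μ, ENNReal.ofReal |f t| = φ t * ψ t := by
    filter_upwards [hmem] with t ht
    obtain ⟨ht0, hL⟩ := hfacts t ht
    rw [hφdef, hψdef]
    simp only
    rw [← ENNReal.ofReal_mul (by positivity)]
    congr 1
    symm
    have h1 : (-Real.log t) ^ (β/2) * (-Real.log t) ^ (-(β/2)) = 1 := by
      rw [← Real.rpow_add hL]; simp
    have h2 : t ^ ((1:ℝ)/2) * t ^ (-((1:ℝ)/2)) = 1 := by
      rw [← Real.rpow_add ht0]; simp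
    calc |f t| * (-Real.log t) ^ (β/2) * t ^ ((1:ℝ)/2)
          * ((-Real.log t) ^ (-(β/2)) * t ^ (-((1:ℝ)/2)))
        = |f t| * ((-Real.log t) ^ (β/2) * (-Real.log t) ^ (-(β/2)))
            * (t ^ ((1:ℝ)/2) * t ^ (-((1:ℝ)/2))) := by ring
      _ = |f t| := by rw [h1, h2]; ring
  have hconj : Real.HolderConjugate 2 2 := Real.HolderConjugate.two_two
  have hH := ENNReal.lintegral_mul_le_Lp_mul_Lq μ hconj hφm.aemeasurable hψm.aemeasurable
  have hφ2 : ∫⁻ t, φ t ^ (2:ℝ) ∂μ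
      = ∫⁻ t in Ioo r R, ENNReal.ofReal (f t ^ 2 * (-Real.log t) ^ β * t) := by
    rw [hμ]
    apply lintegral_congr_ae
    filter_upwards [hmem] with t ht
    obtain ⟨ht0, hL⟩ := hfacts t ht
    rw [hφdef]
    simp only
    rw [show (2:ℝ) = ((2:ℕ):ℝ) by norm_num, ENNReal.rpow_natCast,
      ← ENNReal.ofReal_pow (by positivity)]
    congr 1
    have h1 : ((-Real.log t) ^ (β/2)) ^ (2:ℕ) = (-Real.log t) ^ β := by
      rw [← Real.rpow_natCast ((-Real.log t) ^ (β/2)) 2, ← Real.rpow_mul hL.le]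
      norm_num
    have h2 : (t ^ ((1:ℝ)/2)) ^ (2:ℕ) = t := by
      rw [← Real.rpow_natCast (t ^ ((1:ℝ)/2)) 2, ← Real.rpow_mul ht0.le]
      norm_num
    calc (|f t| * (-Real.log t) ^ (β/2) * t ^ ((1:ℝ)/2)) ^ (2:ℕ)
        = |f t| ^ (2:ℕ) * ((-Real.log t) ^ (β/2)) ^ (2:ℕ) * (t ^ ((1:ℝ)/2)) ^ (2:ℕ) := by
          ring
      _ = f t ^ 2 * (-Real.log t) ^ β * t := by rw [h1, h2, sq_abs]
  have hψ2 : ∫⁻ t, ψ t ^ (2:ℝ) ∂μ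
      = ∫⁻ t in Ioo r R, ENNReal.ofReal ((-Real.log t) ^ (-β) * t⁻¹) := by
    rw [hμ]
    apply lintegral_congr_ae
    filter_upwards [hmem] with t ht
    obtain ⟨ht0, hL⟩ := hfacts t ht
    rw [hψdef]
    simp only
    rw [show (2:ℝ) = ((2:ℕ):ℝ) by norm_num, ENNReal.rpow_natCast,
      ← ENNReal.ofReal_pow (by positivity)]
    congr 1
    have h1 : ((-Real.log t) ^ (-(β/2))) ^ (2:ℕ) = (-Real.log t) ^ (-β) := by
      rw [← Real.rpow_natCast ((-Real.log t) ^ (-(β/2))) 2, ← Real.rpow_mul hL.le]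
      norm_num
    have h2 : (t ^ (-((1:ℝ)/2))) ^ (2:ℕ) = t⁻¹ := by
      rw [← Real.rpow_natCast (t ^ (-((1:ℝ)/2))) 2, ← Real.rpow_mul ht0.le]
      norm_num
      rw [Real.rpow_neg_one]
    calc ((-Real.log t) ^ (-(β/2)) * t ^ (-((1:ℝ)/2))) ^ (2:ℕ)
        = ((-Real.log t) ^ (-(β/2))) ^ (2:ℕ) * (t ^ (-((1:ℝ)/2))) ^ (2:ℕ) := by ring
      _ = (-Real.log t) ^ (-β) * t⁻¹ := by rw [h1, h2]
  calc (∫⁻ t in Ioo r R, ENNReal.ofReal |f t|) ^ (2:ℕ)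
      = (∫⁻ t, φ t * ψ t ∂μ) ^ (2:ℕ) := by rw [hμ, lintegral_congr_ae hprod]
    _ ≤ ((∫⁻ t, φ t ^ (2:ℝ) ∂μ) ^ ((1:ℝ)/2) * (∫⁻ t, ψ t ^ (2:ℝ) ∂μ) ^ ((1:ℝ)/2)) ^ (2:ℕ) := by
        exact pow_le_pow_left' hH 2
    _ = (∫⁻ t, φ t ^ (2:ℝ) ∂μ) * (∫⁻ t, ψ t ^ (2:ℝ) ∂μ) := by
        rw [mul_pow, hardy_sq_half2, hardy_sq_half2]
    _ = _ := by rw [hφ2, hψ2]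


/-- **Weighted Hardy-type inequality with logarithmic weights (case `k < 1`).**
For `0 < R < 1`, an integer `k < 1`, and `f ∈ L²((0,R), |ln r|^k r dr)`,
the primitive `h(r) = -∫_r^R f(t) dt` lies in `L²((0,R), |ln r|^{k-2} r⁻¹ dr)`
with `∫ |h|² |ln r|^{k-2} r⁻¹ ≤ C ∫ |f|² |ln r|^k r`, for a constant `C`
depending only on `k` and `R`. -/
theorem weighted_hardy_log_klt_one
    (R : ℝ) (hR0 : 0 < R) (hR1 : R < 1) (k : ℤ) (hk : k < 1) :
    ∃ C : ℝ, 0 < C ∧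
      ∀ f : ℝ → ℝ, Measurable f →
        (∫⁻ r in Ioo (0 : ℝ) R,
            ENNReal.ofReal ((f r) ^ 2 * |Real.log r| ^ k * r)) < ⊤ →
        (∫⁻ r in Ioo (0 : ℝ) R,
            ENNReal.ofReal ((-∫ t in Ioo r R, f t) ^ 2 * |Real.log r| ^ (k - 2) / r)) ≤
          ENNReal.ofReal C *
            ∫⁻ r in Ioo (0 : ℝ) R,
              ENNReal.ofReal ((f r) ^ 2 * |Real.log r| ^ k * r) := by
  have hk1 : (k:ℝ) < 1 := by exact_mod_cast hk
  obtain ⟨α, hαdef⟩ : ∃ a : ℝ, a = (1 - (k:ℝ)) / 2 := ⟨_, rfl⟩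
  have hα : 0 < α := by rw [hαdef]; linarith
  obtain ⟨β, hβdef⟩ : ∃ b : ℝ, b = ((k:ℝ) + 1) / 2 := ⟨_, rfl⟩
  have hβα : -β = α - 1 := by rw [hβdef, hαdef]; ring
  have h1k : (0:ℝ) < 1 - (k:ℝ) := by linarith
  have hCpos : 0 < 4 / (1 - (k:ℝ))^2 := div_pos (by norm_num) (pow_pos h1k 2)
  refine ⟨4 / (1 - (k:ℝ))^2, hCpos, ?_⟩
  intro f hf _
  set F : ℝ → ENNReal := fun t => ENNReal.ofReal (f t ^ 2 * (-Real.log t) ^ β * t) with hFdef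
  set W : ℝ → ENNReal := fun r => ENNReal.ofReal ((-Real.log r) ^ (-α - 1) / r) with hWdef
  have hFm : Measurable F := hardy_meas2 hf β
  have hWm : Measurable W := hardy_meas (-α - 1)
  have hfacts : ∀ r ∈ Ioo (0:ℝ) R, 0 < r ∧ r < R ∧ 0 < -Real.log r := by
    intro r hr
    refine ⟨hr.1, hr.2, ?_⟩
    have : Real.log r < 0 := Real.log_neg hr.1 (lt_trans hr.2 hR1)
    linarith
  -- the RHS integral, in rpow form
  have hRHS : (∫⁻ r in Ioo (0:ℝ) R, ENNReal.ofReal (f r ^ 2 * |Real.log r| ^ k * r))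
      = ∫⁻ r in Ioo (0:ℝ) R, ENNReal.ofReal (f r ^ 2 * (-Real.log r) ^ ((k:ℝ)) * r) := by
    apply setLIntegral_congr_fun measurableSet_Ioo
    intro r hr
    obtain ⟨hr0, hrR, hL⟩ := hfacts r hr
    beta_reduce
    rw [abs_of_neg (by linarith : Real.log r < 0), Real.rpow_intCast]
  -- pointwise bound
  have hpoint : ∀ r ∈ Ioo (0:ℝ) R,
      ENNReal.ofReal ((-∫ t in Ioo r R, f t) ^ 2 * (-Real.log r) ^ ((k:ℝ) - 2) / r)
        ≤ ENNReal.ofReal (1/α) * ((∫⁻ t in Ioo r R, F t) * W r) := by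
    intro r hr
    obtain ⟨hr0, hrR, hL⟩ := hfacts r hr
    set h0 : ℝ := -∫ t in Ioo r R, f t with hh0
    have e1 : ENNReal.ofReal (h0 ^ 2 * (-Real.log r) ^ ((k:ℝ) - 2) / r)
        = ENNReal.ofReal (h0 ^ 2)
            * ENNReal.ofReal ((-Real.log r) ^ ((k:ℝ) - 2) / r) := by
      rw [mul_div_assoc, ENNReal.ofReal_mul (sq_nonneg _)]
    have e2 : ENNReal.ofReal (h0 ^ 2)
        ≤ (∫⁻ t in Ioo r R, ENNReal.ofReal |f t|) ^ (2:ℕ) := by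
      have hb : ENNReal.ofReal |h0| ≤ ∫⁻ t in Ioo r R, ENNReal.ofReal |f t| := by
        rw [hh0, abs_neg]
        calc ENNReal.ofReal |∫ t in Ioo r R, f t|
            = ‖∫ t in Ioo r R, f t‖ₑ := by
              rw [← Real.norm_eq_abs, ofReal_norm_eq_enorm]
          _ ≤ ∫⁻ t in Ioo r R, ‖f t‖ₑ := enorm_integral_le_lintegral_enorm _
          _ = ∫⁻ t in Ioo r R, ENNReal.ofReal |f t| := by
              apply lintegral_congr
              intro t
              rw [← Real.norm_eq_abs, ofReal_norm_eq_enorm]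
      calc ENNReal.ofReal (h0 ^ 2) = ENNReal.ofReal (|h0| ^ 2) := by rw [sq_abs]
        _ = ENNReal.ofReal |h0| ^ (2:ℕ) := by rw [ENNReal.ofReal_pow (abs_nonneg _)]
        _ ≤ _ := pow_le_pow_left' hb 2
    have e3 := hardy_holder hf hr0 hrR hR1 β
    have e4 : (∫⁻ t in Ioo r R, ENNReal.ofReal ((-Real.log t) ^ (-β) * t⁻¹))
        ≤ ENNReal.ofReal ((-Real.log r) ^ α / α) := by
      have hconv : (∫⁻ t in Ioo r R, ENNReal.ofReal ((-Real.log t) ^ (-β) * t⁻¹))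
          = ∫⁻ t in Ioo r R, ENNReal.ofReal ((-Real.log t) ^ (α - 1) / t) := by
        apply lintegral_congr
        intro t
        rw [hβα, div_eq_mul_inv]
      rw [hconv, hardy_aux_int α (ne_of_gt hα) hr0 (le_of_lt hrR) hR1]
      apply ENNReal.ofReal_le_ofReal
      have hnn : 0 ≤ (-Real.log R) ^ α := by
        have : Real.log R < 0 := Real.log_neg hR0 hR1
        apply Real.rpow_nonneg; linarith
      gcongr
      linarith
    have e5 : ENNReal.ofReal ((-Real.log r) ^ α / α)
          * ENNReal.ofReal ((-Real.log r) ^ ((k:ℝ) - 2) / r)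
        = ENNReal.ofReal (1/α) * W r := by
      rw [hWdef]
      simp only
      rw [← ENNReal.ofReal_mul (div_nonneg (Real.rpow_nonneg hL.le _) hα.le),
        ← ENNReal.ofReal_mul (one_div_nonneg.mpr hα.le)]
      congr 1
      have hexp : (-Real.log r) ^ α * (-Real.log r) ^ ((k:ℝ) - 2)
          = (-Real.log r) ^ (-α - 1) := by
        rw [← Real.rpow_add hL]
        congr 1
        rw [hαdef]; ring
      calc (-Real.log r) ^ α / α * ((-Real.log r) ^ ((k:ℝ) - 2) / r)
          = ((-Real.log r) ^ α * (-Real.log r) ^ ((k:ℝ) - 2)) / (α * r) := by ring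
        _ = (-Real.log r) ^ (-α - 1) / (α * r) := by rw [hexp]
        _ = 1/α * ((-Real.log r) ^ (-α - 1) / r) := by ring
    calc ENNReal.ofReal (h0 ^ 2 * (-Real.log r) ^ ((k:ℝ) - 2) / r)
        = ENNReal.ofReal (h0 ^ 2)
            * ENNReal.ofReal ((-Real.log r) ^ ((k:ℝ) - 2) / r) := e1
      _ ≤ (∫⁻ t in Ioo r R, ENNReal.ofReal |f t|) ^ (2:ℕ)
            * ENNReal.ofReal ((-Real.log r) ^ ((k:ℝ) - 2) / r) := mul_le_mul_left e2 _
      _ ≤ ((∫⁻ t in Ioo r R, F t)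
            * (∫⁻ t in Ioo r R, ENNReal.ofReal ((-Real.log t) ^ (-β) * t⁻¹)))
            * ENNReal.ofReal ((-Real.log r) ^ ((k:ℝ) - 2) / r) := mul_le_mul_left e3 _
      _ ≤ ((∫⁻ t in Ioo r R, F t) * ENNReal.ofReal ((-Real.log r) ^ α / α))
            * ENNReal.ofReal ((-Real.log r) ^ ((k:ℝ) - 2) / r) :=
          mul_le_mul_left (mul_le_mul_right e4 _) _
      _ = (∫⁻ t in Ioo r R, F t)
            * (ENNReal.ofReal ((-Real.log r) ^ α / α)
              * ENNReal.ofReal ((-Real.log r) ^ ((k:ℝ) - 2) / r)) := by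
          rw [mul_assoc]
      _ = ENNReal.ofReal (1/α) * ((∫⁻ t in Ioo r R, F t) * W r) := by
          rw [e5]; ring
  -- rewrite LHS in rpow form
  have hLHS : (∫⁻ r in Ioo (0:ℝ) R,
        ENNReal.ofReal ((-∫ t in Ioo r R, f t) ^ 2 * |Real.log r| ^ (k - 2) / r))
      = ∫⁻ r in Ioo (0:ℝ) R,
          ENNReal.ofReal ((-∫ t in Ioo r R, f t) ^ 2 * (-Real.log r) ^ ((k:ℝ) - 2) / r) := by
    apply setLIntegral_congr_fun measurableSet_Ioo
    intro r hr
    obtain ⟨hr0, hrR, hL⟩ := hfacts r hr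
    have hcast : ((k - 2 : ℤ) : ℝ) = (k:ℝ) - 2 := by push_cast; ring
    beta_reduce
    rw [abs_of_neg (by linarith : Real.log r < 0),
      ← Real.rpow_intCast (-Real.log r) (k - 2), hcast]
  -- the swap identity
  have hIW : ∀ r ∈ Ioo (0:ℝ) R,
      (∫⁻ t in Ioo r R, F t) * W r
        = ∫⁻ t in Ioo (0:ℝ) R, (Ioi r).indicator F t * W r := by
    intro r hr
    obtain ⟨hr0, hrR, hL⟩ := hfacts r hr
    rw [lintegral_mul_const' (W r) _ ENNReal.ofReal_ne_top]
    congr 1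
    rw [lintegral_indicator measurableSet_Ioi, Measure.restrict_restrict measurableSet_Ioi]
    have hset : Ioi r ∩ Ioo (0:ℝ) R = Ioo r R := by
      ext t
      simp only [mem_inter_iff, mem_Ioi, mem_Ioo]
      constructor
      · rintro ⟨h1, h2⟩; exact ⟨h1, h2.2⟩
      · rintro ⟨h1, h2⟩; exact ⟨h1, lt_trans hr0 h1, h2⟩
    rw [hset]
  have huncurry : AEMeasurable
      (Function.uncurry fun r t => (Ioi r).indicator F t * W r)
      ((volume.restrict (Ioo (0:ℝ) R)).prod (volume.restrict (Ioo (0:ℝ) R))) := by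
    have heq : (Function.uncurry fun r t => (Ioi r).indicator F t * W r)
        = Set.indicator {p : ℝ × ℝ | p.1 < p.2} (fun p => F p.2 * W p.1) := by
      funext p
      rcases p with ⟨r, t⟩
      by_cases hrt : r < t
      · have h1 : t ∈ Ioi r := hrt
        have h2 : ((r, t) : ℝ × ℝ) ∈ {p : ℝ × ℝ | p.1 < p.2} := hrt
        simp only [Function.uncurry, Set.indicator_of_mem h1, Set.indicator_of_mem h2]
      · have h1 : t ∉ Ioi r := hrt
        have h2 : ((r, t) : ℝ × ℝ) ∉ {p : ℝ × ℝ | p.1 < p.2} := hrt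
        simp only [Function.uncurry, Set.indicator_of_notMem h1,
          Set.indicator_of_notMem h2, zero_mul]
    rw [heq]
    exact (((hFm.comp measurable_snd).mul (hWm.comp measurable_fst)).indicator
      (measurableSet_lt measurable_fst measurable_snd)).aemeasurable
  have hinner : ∀ t ∈ Ioo (0:ℝ) R,
      (∫⁻ r in Ioo (0:ℝ) R, (Ioi r).indicator F t * W r)
        = F t * ∫⁻ r in Ioo 0 t, W r := by
    intro t ht
    have hcong : ∀ r : ℝ, (Ioi r).indicator F t * W r
        = (Iio t).indicator (fun r => F t * W r) r := by
      intro r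
      by_cases hrt : r < t
      · rw [Set.indicator_of_mem (show t ∈ Ioi r from hrt),
          Set.indicator_of_mem (show r ∈ Iio t from hrt)]
      · rw [Set.indicator_of_notMem (show t ∉ Ioi r from hrt),
          Set.indicator_of_notMem (show r ∉ Iio t from hrt), zero_mul]
    rw [lintegral_congr hcong, lintegral_indicator measurableSet_Iio,
      Measure.restrict_restrict measurableSet_Iio]
    have hset : Iio t ∩ Ioo (0:ℝ) R = Ioo 0 t := by
      ext x
      constructor
      · rintro ⟨h1, h2⟩; exact ⟨h2.1, h1⟩
      · rintro ⟨h1, h2⟩; exact ⟨h2, h1, lt_trans h2 ht.2⟩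
    rw [hset, lintegral_const_mul' (F t) W ENNReal.ofReal_ne_top]
  have hinner2 : ∀ t ∈ Ioo (0:ℝ) R,
      F t * (∫⁻ r in Ioo 0 t, W r)
        ≤ ENNReal.ofReal (1/α)
            * ENNReal.ofReal (f t ^ 2 * (-Real.log t) ^ ((k:ℝ)) * t) := by
    intro t ht
    obtain ⟨ht0, htR, hLt⟩ := hfacts t ht
    have himp : (∫⁻ r in Ioo 0 t, W r)
        ≤ ENNReal.ofReal ((-Real.log t) ^ (-α) / α) := by
      have := hardy_aux_int_improper (-α) (by linarith) ht0 (lt_trans htR hR1)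
      simpa using this
    calc F t * (∫⁻ r in Ioo 0 t, W r)
        ≤ F t * ENNReal.ofReal ((-Real.log t) ^ (-α) / α) := mul_le_mul_right himp _
      _ = ENNReal.ofReal (1/α)
            * ENNReal.ofReal (f t ^ 2 * (-Real.log t) ^ ((k:ℝ)) * t) := by
          rw [hFdef]
          simp only
          rw [← ENNReal.ofReal_mul (by positivity),
            ← ENNReal.ofReal_mul (one_div_nonneg.mpr hα.le)]
          congr 1
          have hexp : (-Real.log t) ^ β * (-Real.log t) ^ (-α) = (-Real.log t) ^ ((k:ℝ)) := by
            rw [← Real.rpow_add hLt]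
            congr 1
            rw [hβdef, hαdef]; ring
          calc f t ^ 2 * (-Real.log t) ^ β * t * ((-Real.log t) ^ (-α) / α)
              = 1/α * (f t ^ 2 * ((-Real.log t) ^ β * (-Real.log t) ^ (-α)) * t) := by ring
            _ = 1/α * (f t ^ 2 * (-Real.log t) ^ ((k:ℝ)) * t) := by rw [hexp]
  -- put everything together
  have hα2 : (1:ℝ)/α * (1/α) = 4 / (1 - (k:ℝ))^2 := by
    rw [hαdef]
    field_simp
    ring
  calc (∫⁻ r in Ioo (0:ℝ) R,
        ENNReal.ofReal ((-∫ t in Ioo r R, f t) ^ 2 * |Real.log r| ^ (k - 2) / r))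
      = ∫⁻ r in Ioo (0:ℝ) R,
          ENNReal.ofReal ((-∫ t in Ioo r R, f t) ^ 2 * (-Real.log r) ^ ((k:ℝ) - 2) / r) :=
        hLHS
    _ ≤ ∫⁻ r in Ioo (0:ℝ) R, ENNReal.ofReal (1/α) * ((∫⁻ t in Ioo r R, F t) * W r) := by
        apply lintegral_mono_ae
        filter_upwards [ae_restrict_mem measurableSet_Ioo] with r hr
        exact hpoint r hr
    _ = ENNReal.ofReal (1/α)
          * ∫⁻ r in Ioo (0:ℝ) R, (∫⁻ t in Ioo r R, F t) * W r :=
        lintegral_const_mul' _ _ ENNReal.ofReal_ne_top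
    _ = ENNReal.ofReal (1/α)
          * ∫⁻ r in Ioo (0:ℝ) R, ∫⁻ t in Ioo (0:ℝ) R, (Ioi r).indicator F t * W r := by
        congr 1
        apply setLIntegral_congr_fun measurableSet_Ioo
        exact hIW
    _ = ENNReal.ofReal (1/α)
          * ∫⁻ t in Ioo (0:ℝ) R, ∫⁻ r in Ioo (0:ℝ) R, (Ioi r).indicator F t * W r := by
        rw [lintegral_lintegral_swap huncurry]
    _ = ENNReal.ofReal (1/α)
          * ∫⁻ t in Ioo (0:ℝ) R, F t * ∫⁻ r in Ioo 0 t, W r := by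
        congr 1
        apply setLIntegral_congr_fun measurableSet_Ioo
        exact hinner
    _ ≤ ENNReal.ofReal (1/α)
          * ∫⁻ t in Ioo (0:ℝ) R,
              ENNReal.ofReal (1/α) * ENNReal.ofReal (f t ^ 2 * (-Real.log t) ^ ((k:ℝ)) * t) := by
        apply mul_le_mul_right
        apply lintegral_mono_ae
        filter_upwards [ae_restrict_mem measurableSet_Ioo] with t ht
        exact hinner2 t ht
    _ = ENNReal.ofReal (1/α) * (ENNReal.ofReal (1/α)
          * ∫⁻ t in Ioo (0:ℝ) R, ENNReal.ofReal (f t ^ 2 * (-Real.log t) ^ ((k:ℝ)) * t)) := by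
        rw [lintegral_const_mul' _ _ ENNReal.ofReal_ne_top]
    _ = ENNReal.ofReal (4 / (1 - (k:ℝ))^2)
          * ∫⁻ t in Ioo (0:ℝ) R, ENNReal.ofReal (f t ^ 2 * (-Real.log t) ^ ((k:ℝ)) * t) := by
        rw [← mul_assoc, ← ENNReal.ofReal_mul (by positivity), hα2]
    _ = ENNReal.ofReal (4 / (1 - (k:ℝ))^2)
          * ∫⁻ r in Ioo (0:ℝ) R, ENNReal.ofReal (f r ^ 2 * |Real.log r| ^ k * r) := by
        rw [hRHS]
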